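/- Let r be a regular reward function, p ∈ (0,1), s := 1/(1−p), and ω := η_s^{-1}. Then for every x ≥ 0, r'(ω(x)) ≥ (1−p)·r'(ω(x − ω(x))), with equality whenever ω(x) ≥ τ_s; consequently the infimum over x ≥ 0 of the ratio r'(ω(x)) / r'(ω(x − ω(x))) equals 1−p, i.e., the universal greed index ι(ω) := 1 − inf_{x≥0} r'(ω(x))/r'(ω(x−ω(x))) equals p. -/

import Mathlib

open Set Filter MeasureTheory

/-- A regular reward function `r` with derivative `r'`: `r : [0,∞) → [0,∞)` is
nondecreasing, Lipschitz, strictly concave, differentiable, with `r 0 = 0`; its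
derivative `r'` is continuous, strictly decreasing, positive, and tends to `0` at `+∞`.
For each `s ≥ 1`, `τ s` is the unique point with `r' (τ s) = r' 0 / s`, and
`κ s : [τ s, ∞) → [0, ∞)` is defined by the relation `r' (κ s x) = s * r' x`
(for `s = 1` these reduce to `τ 1 = 0` and `κ 1 = id`); regularity means `κ s` is
convex on `[τ s, ∞)` for all `s > 1`. -/
structure RegularReward where
  r : ℝ → ℝ
  r' : ℝ → ℝ
  r_zero : r 0 = 0
  r_nonneg : ∀ x : ℝ, 0 ≤ x → 0 ≤ r x
  r_mono : MonotoneOn r (Ici (0 : ℝ))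
  r_lip : ∃ K : NNReal, LipschitzOnWith K r (Ici (0 : ℝ))
  r_strictConcave : StrictConcaveOn ℝ (Ici (0 : ℝ)) r
  r_hasDeriv : ∀ x : ℝ, 0 ≤ x → HasDerivWithinAt r (r' x) (Ici (0 : ℝ)) x
  deriv_cont : ContinuousOn r' (Ici (0 : ℝ))
  deriv_strictAnti : StrictAntiOn r' (Ici (0 : ℝ))
  deriv_pos : ∀ x : ℝ, 0 ≤ x → 0 < r' x
  deriv_tendsto_zero : Tendsto r' atTop (nhds 0)
  τ : ℝ → ℝ
  κ : ℝ → ℝ → ℝ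
  τ_nonneg : ∀ s : ℝ, 1 ≤ s → 0 ≤ τ s
  τ_spec : ∀ s : ℝ, 1 ≤ s → r' (τ s) = r' 0 / s
  κ_nonneg : ∀ s : ℝ, 1 ≤ s → ∀ x : ℝ, τ s ≤ x → 0 ≤ κ s x
  κ_spec : ∀ s : ℝ, 1 ≤ s → ∀ x : ℝ, τ s ≤ x → r' (κ s x) = s * r' x
  κ_convex : ∀ s : ℝ, 1 < s → ConvexOn ℝ (Ici (τ s)) (κ s)

namespace RegularReward

/-- The extension `κ̄_s (x) := κ_s (max x τ_s)` of `κ_s` to `[0, ∞)`. -/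
noncomputable def kbar (R : RegularReward) (s : ℝ) (x : ℝ) : ℝ :=
  R.κ s (max x (R.τ s))

/-- `M_s(x) = ⌈ln (r' 0 / r' x) / ln s⌉`. -/
noncomputable def M (R : RegularReward) (s : ℝ) (x : ℝ) : ℕ :=
  ⌈Real.log (R.r' 0 / R.r' x) / Real.log s⌉₊

/-- `M̃_s(x) = ⌊ln (r' 0 / r' x) / ln s⌋ + 1`. -/
noncomputable def Mt (R : RegularReward) (s : ℝ) (x : ℝ) : ℕ :=
  ⌊Real.log (R.r' 0 / R.r' x) / Real.log s⌋₊ + 1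

/-- `η_s(x) := ∑_{i=1}^∞ κ̄_s^{(i-1)}(x)`, a finite sum since `κ̄_s^{(i)}(x) = 0` for
`i ≥ M_s(x)`. -/
noncomputable def η (R : RegularReward) (s : ℝ) (x : ℝ) : ℝ :=
  ∑' i : ℕ, (R.kbar s)^[i] x

end RegularReward

/-- **The universal greed index of `ω` equals `p`** (Theorem 4, part 3). Let `r` be a
regular reward function, `p ∈ (0,1)`, `s = 1/(1-p)`, and `ω = η_s⁻¹`. Then for every
`x ≥ 0`, `r' (ω x) ≥ (1-p) · r' (ω (x - ω x))`, with equality whenever `ω x ≥ τ_s`;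
the infimum over `x ≥ 0` of `r' (ω x) / r' (ω (x - ω x))` equals `1 - p`, so the
universal greed index `ι(ω) = 1 - inf_{x ≥ 0} r'(ω x)/r'(ω (x - ω x))` equals `p`. -/
theorem omega_greed_index (R : RegularReward) (p : ℝ) (hp : p ∈ Ioo (0 : ℝ) 1)
    (s : ℝ) (hs : s = 1 / (1 - p))
    (ω : ℝ → ℝ)
    (hω_nonneg : ∀ x : ℝ, 0 ≤ x → 0 ≤ ω x)
    (hω_rightInv : ∀ x : ℝ, 0 ≤ x → R.η s (ω x) = x)
    (hω_leftInv : ∀ y : ℝ, 0 ≤ y → ω (R.η s y) = y) :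
    (∀ x : ℝ, 0 ≤ x → (1 - p) * R.r' (ω (x - ω x)) ≤ R.r' (ω x)) ∧
      (∀ x : ℝ, 0 ≤ x → R.τ s ≤ ω x →
        R.r' (ω x) = (1 - p) * R.r' (ω (x - ω x))) ∧
      (⨅ x : Ici (0 : ℝ), R.r' (ω x.1) / R.r' (ω (x.1 - ω x.1))) = 1 - p ∧
      1 - (⨅ x : Ici (0 : ℝ), R.r' (ω x.1) / R.r' (ω (x.1 - ω x.1))) = p := by
  obtain ⟨hp0, hp1⟩ := hp
  have h1p : 0 < 1 - p := by linarith
  have hs1 : 1 < s := by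
    rw [hs, lt_div_iff₀ h1p]; linarith
  have hsle : 1 ≤ s := hs1.le
  have hsp : (1 - p) * s = 1 := by rw [hs]; field_simp
  set τ := R.τ s with hτdef
  have hτ0 : 0 ≤ τ := R.τ_nonneg s hsle
  have hr'τ : R.r' τ = R.r' 0 / s := R.τ_spec s hsle
  have hinj : InjOn R.r' (Ici 0) := R.deriv_strictAnti.injOn
  have hκτ : R.κ s τ = 0 := by
    have h1 : R.r' (R.κ s τ) = s * R.r' τ := R.κ_spec s hsle τ le_rfl
    have h2 : R.r' (R.κ s τ) = R.r' 0 := by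
      rw [h1, hr'τ]; field_simp
    exact hinj (R.κ_nonneg s hsle τ le_rfl) (Set.mem_Ici.mpr le_rfl) h2
  have hkbar_nonneg : ∀ y : ℝ, 0 ≤ R.kbar s y := fun y =>
    R.κ_nonneg s hsle _ (le_max_right _ _)
  have hkbar0 : R.kbar s 0 = 0 := by
    simp only [RegularReward.kbar, max_eq_right hτ0, ← hτdef, hκτ]
  have hkbar_le : ∀ y : ℝ, y ≤ τ → R.kbar s y = 0 := fun y hy => by
    simp only [RegularReward.kbar, max_eq_right hy, ← hτdef, hκτ]
  have hkbar_gt : ∀ y : ℝ, τ ≤ y → R.r' (R.kbar s y) = s * R.r' y := fun y hy => by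
    simp only [RegularReward.kbar, ← hτdef, max_eq_left hy]
    exact R.κ_spec s hsle y hy
  have hiter0 : ∀ i : ℕ, (R.kbar s)^[i] 0 = 0 := fun i => Function.iterate_fixed hkbar0 i
  have hP : ∀ n : ℕ, ∀ y : ℝ, 0 ≤ y → R.r' τ < s ^ n * R.r' y →
      (R.kbar s)^[n + 1] y = 0 := by
    intro n
    induction n with
    | zero =>
      intro y hy h
      simp only [pow_zero, one_mul] at h
      have hyτ : y < τ := (R.deriv_strictAnti.lt_iff_gt hτ0 hy).mp h
      simpa using hkbar_le y hyτ.le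
    | succ n ih =>
      intro y hy h
      rcases le_or_gt y τ with hyτ | hyτ
      · rw [Function.iterate_succ_apply, Function.iterate_succ_apply, hkbar_le y hyτ,
          hkbar0]
        exact hiter0 n
      · rw [Function.iterate_succ_apply]
        apply ih _ (hkbar_nonneg y)
        rw [hkbar_gt y hyτ.le]
        calc R.r' τ < s ^ (n + 1) * R.r' y := h
          _ = s ^ n * (s * R.r' y) := by ring
  have hfin : ∀ y : ℝ, 0 ≤ y → ∃ N : ℕ, ∀ i : ℕ, N ≤ i → (R.kbar s)^[i] y = 0 := by
    intro y hy
    have hr'y : 0 < R.r' y := R.deriv_pos y hy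
    obtain ⟨n, hn⟩ := pow_unbounded_of_one_lt (R.r' τ / R.r' y) hs1
    have h : R.r' τ < s ^ n * R.r' y := by
      rw [div_lt_iff₀ hr'y] at hn; linarith
    refine ⟨n + 1, fun i hi => ?_⟩
    obtain ⟨k, rfl⟩ := Nat.exists_eq_add_of_le hi
    rw [Nat.add_comm, Function.iterate_add_apply, hP n y hy h]
    exact hiter0 k
  have hηsum : ∀ y : ℝ, ∀ N : ℕ, (∀ i, N ≤ i → (R.kbar s)^[i] y = 0) →
      R.η s y = ∑ i ∈ Finset.range N, (R.kbar s)^[i] y := by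
    intro y N hN
    exact tsum_eq_sum (fun i hi => hN i (Nat.le_of_not_lt (fun h => hi (Finset.mem_range.mpr h))))
  have hη0 : R.η s 0 = 0 := by
    have := hηsum 0 0 (fun i _ => hiter0 i)
    simpa using this
  have hη_rec : ∀ y : ℝ, 0 ≤ y → R.η s y = y + R.η s (R.kbar s y) := by
    intro y hy
    obtain ⟨N, hN⟩ := hfin y hy
    have hN' : ∀ i, N ≤ i → (R.kbar s)^[i] (R.kbar s y) = 0 := by
      intro i hi
      rw [← Function.iterate_succ_apply]
      exact hN (i + 1) (le_trans hi (Nat.le_succ i))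
    rw [hηsum y (N + 1) (fun i hi => hN i (le_trans (Nat.le_succ N) hi)),
        hηsum _ N hN', Finset.sum_range_succ']
    simp only [Function.iterate_succ_apply, Function.iterate_zero_apply]
    ring
  have hmain : ∀ x : ℝ, 0 ≤ x → ω (x - ω x) = R.kbar s (ω x) := by
    intro x hx
    have hy : 0 ≤ ω x := hω_nonneg x hx
    have h1 : x - ω x = R.η s (R.kbar s (ω x)) := by
      have := hη_rec (ω x) hy
      rw [hω_rightInv x hx] at this
      linarith
    rw [h1, hω_leftInv _ (hkbar_nonneg (ω x))]
  have claim1 : ∀ x : ℝ, 0 ≤ x → (1 - p) * R.r' (ω (x - ω x)) ≤ R.r' (ω x) := by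
    intro x hx
    rw [hmain x hx]
    have hy : 0 ≤ ω x := hω_nonneg x hx
    rcases le_or_gt τ (ω x) with h | h
    · rw [hkbar_gt _ h, ← mul_assoc, hsp, one_mul]
    · rw [hkbar_le _ h.le]
      have h2 : (1 - p) * R.r' 0 = R.r' τ := by
        rw [hr'τ, hs]
        field_simp
      rw [h2]
      exact (R.deriv_strictAnti.le_iff_ge hτ0 hy).mpr h.le
  have claim2 : ∀ x : ℝ, 0 ≤ x → τ ≤ ω x →
      R.r' (ω x) = (1 - p) * R.r' (ω (x - ω x)) := by
    intro x hx h
    rw [hmain x hx, hkbar_gt _ h, ← mul_assoc, hsp, one_mul]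
  have hdenom_pos : ∀ x : ℝ, 0 ≤ x → 0 < R.r' (ω (x - ω x)) := by
    intro x hx
    rw [hmain x hx]
    exact R.deriv_pos _ (hkbar_nonneg _)
  have hlb : ∀ x : Ici (0 : ℝ), 1 - p ≤ R.r' (ω x.1) / R.r' (ω (x.1 - ω x.1)) := by
    rintro ⟨x, hx⟩
    rw [le_div_iff₀ (hdenom_pos x hx)]
    exact claim1 x hx
  have hητ : R.η s τ = τ := by
    rw [hη_rec τ hτ0, hkbar_le τ le_rfl, hη0]; ring
  have hωτ : ω τ = τ := by
    conv_lhs => rw [← hητ]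
    exact hω_leftInv τ hτ0
  have hval : R.r' (ω τ) / R.r' (ω (τ - ω τ)) = 1 - p := by
    rw [claim2 τ hτ0 (le_of_eq hωτ.symm)]
    exact mul_div_cancel_right₀ _ (ne_of_gt (hdenom_pos τ hτ0))
  have hinf : (⨅ x : Ici (0 : ℝ), R.r' (ω x.1) / R.r' (ω (x.1 - ω x.1))) = 1 - p := by
    apply le_antisymm
    · calc (⨅ x : Ici (0 : ℝ), R.r' (ω x.1) / R.r' (ω (x.1 - ω x.1)))
          ≤ R.r' (ω τ) / R.r' (ω (τ - ω τ)) :=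
            ciInf_le ⟨1 - p, by rintro y ⟨x, rfl⟩; exact hlb x⟩ (⟨τ, hτ0⟩ : Ici (0 : ℝ))
        _ = 1 - p := hval
    · exact le_ciInf hlb
  exact ⟨claim1, fun x hx h => claim2 x hx h, hinf, by rw [hinf]; ring⟩
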